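/- For convex, normal functions f, g : [0,1] → [0,1] and any x ∈ (0,1], the weak left envelope of the intersection f ⊓ g satisfies (f ⊓ g)^{Lw}(x) = max(f^{Lw}(x), g^{Lw}(x)). -/
import Mathlib

open Set Classical

noncomputable section

/-- Left envelope: `f^L(x) = sup {f y : 0 ≤ y ≤ x}`. -/
def fL (f : ℝ → ℝ) (x : ℝ) : ℝ := sSup (f '' Set.Icc 0 x)

/-- Weak left envelope: `f^{Lw}(x) = sup {f y : 0 ≤ y < x}` (for `x ∈ (0,1]`). -/
def fLw (f : ℝ → ℝ) (x : ℝ) : ℝ := sSup (f '' Set.Ico 0 x)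

/-- Right envelope: `f^R(x) = sup {f y : x ≤ y ≤ 1}`. -/
def fR (f : ℝ → ℝ) (x : ℝ) : ℝ := sSup (f '' Set.Icc x 1)

/-- `f` maps `[0,1]` into `[0,1]`. -/
def MapsI (f : ℝ → ℝ) : Prop := ∀ x ∈ Set.Icc (0:ℝ) 1, f x ∈ Set.Icc (0:ℝ) 1

/-- `f` is normal: `sup f = 1` on `[0,1]`. -/
def NormalFn (f : ℝ → ℝ) : Prop := sSup (f '' Set.Icc 0 1) = 1

/-- `f` is convex: `f y ≥ min (f x) (f z)` whenever `0 ≤ x ≤ y ≤ z ≤ 1`. -/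
def ConvexFn (f : ℝ → ℝ) : Prop :=
  ∀ x y z : ℝ, 0 ≤ x → x ≤ y → y ≤ z → z ≤ 1 → min (f x) (f z) ≤ f y

/-- Convolution intersection: `(f ⊓ g)(x) = sup {min (f y) (g z) : min y z = x}`. -/
def inter (f g : ℝ → ℝ) (x : ℝ) : ℝ :=
  sSup {v | ∃ y ∈ Set.Icc (0:ℝ) 1, ∃ z ∈ Set.Icc (0:ℝ) 1, min y z = x ∧ v = min (f y) (g z)}

/-- Convolution union: `(f ⊔ g)(x) = sup {min (f y) (g z) : max y z = x}`. -/
def union (f g : ℝ → ℝ) (x : ℝ) : ℝ :=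
  sSup {v | ∃ y ∈ Set.Icc (0:ℝ) 1, ∃ z ∈ Set.Icc (0:ℝ) 1, max y z = x ∧ v = min (f y) (g z)}

/-- `L₁(f) = inf {x ∈ [0,1] : f^L(x) = 1}`. -/
def L1 (f : ℝ → ℝ) : ℝ := sInf {x ∈ Set.Icc (0:ℝ) 1 | fL f x = 1}

/-- `R¹(f) = sup {x ∈ [0,1] : f^R(x) = 1}`. -/
def R1 (f : ℝ → ℝ) : ℝ := sSup {x ∈ Set.Icc (0:ℝ) 1 | fR f x = 1}

/-- The characteristic function `1_{{1}}`. -/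
def ind1 : ℝ → ℝ := fun x => if x = 1 then 1 else 0

/-- The modified intersection `f ⋆ g`. -/
def star (f g : ℝ → ℝ) : ℝ → ℝ :=
  if Set.EqOn f ind1 (Set.Icc (0:ℝ) 1) then g
  else if Set.EqOn g ind1 (Set.Icc (0:ℝ) 1) then f
  else if min (f 1) (g 1) = 1 then inter f g
  else fun x => if x = 1 then 0 else inter f g x

lemma interSet_bdd {f g : ℝ → ℝ} (hf : MapsI f) (t : ℝ) :
    ∀ v ∈ {v | ∃ y ∈ Set.Icc (0:ℝ) 1, ∃ z ∈ Set.Icc (0:ℝ) 1, min y z = t ∧ v = min (f y) (g z)},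
      v ≤ 1 := by
  rintro v ⟨y, hy, z, hz, -, rfl⟩
  exact le_trans (min_le_left _ _) (hf y hy).2

lemma inter_le_one {f g : ℝ → ℝ} (hf : MapsI f) {t : ℝ} (ht : t ∈ Set.Icc (0:ℝ) 1) :
    inter f g t ≤ 1 :=
  csSup_le ⟨min (f t) (g t), t, ht, t, ht, min_self t, rfl⟩ (interSet_bdd hf t)

lemma inter_comm' (f g : ℝ → ℝ) : inter f g = inter g f := by
  funext t
  unfold inter
  congr 1
  ext v
  constructor
  · rintro ⟨y, hy, z, hz, hm, rfl⟩
    exact ⟨z, hz, y, hy, by rw [min_comm]; exact hm, (min_comm _ _)⟩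
  · rintro ⟨y, hy, z, hz, hm, rfl⟩
    exact ⟨z, hz, y, hy, by rw [min_comm]; exact hm, (min_comm _ _)⟩

lemma key_le (f g : ℝ → ℝ) (hf : MapsI f) (hg : MapsI g) (hgn : NormalFn g)
    {x : ℝ} (hx0 : 0 < x) (hx1 : x ≤ 1) : fLw f x ≤ fLw (inter f g) x := by
  have hne : (Set.Ico (0:ℝ) x).Nonempty := ⟨0, le_refl 0, hx0⟩
  have hIco : Set.Ico (0:ℝ) x ⊆ Set.Icc 0 1 :=
    fun t ht => ⟨ht.1, le_trans ht.2.le hx1⟩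
  have hbddI : BddAbove (inter f g '' Set.Ico 0 x) := by
    refine ⟨1, ?_⟩
    rintro _ ⟨t, ht, rfl⟩
    exact inter_le_one hf (hIco ht)
  refine csSup_le (hne.image f) ?_
  rintro _ ⟨y, hy, rfl⟩
  refine le_of_forall_lt ?_
  intro c hc
  have hc1 : c < sSup (g '' Set.Icc 0 1) := by
    rw [hgn]
    exact lt_of_lt_of_le hc (hf y (hIco hy)).2
  obtain ⟨w, ⟨z, hz, rfl⟩, hcz⟩ :=
    exists_lt_of_lt_csSup (⟨g 0, 0, ⟨le_refl 0, zero_le_one⟩, rfl⟩ : (g '' Set.Icc 0 1).Nonempty) hc1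
  set t := min y z with hts
  have htI : t ∈ Set.Ico (0:ℝ) x :=
    ⟨le_min hy.1 hz.1, lt_of_le_of_lt (min_le_left _ _) hy.2⟩
  have h1 : min (f y) (g z) ≤ inter f g t := by
    have hbdd : BddAbove {v | ∃ y ∈ Set.Icc (0:ℝ) 1, ∃ z ∈ Set.Icc (0:ℝ) 1,
        min y z = t ∧ v = min (f y) (g z)} := ⟨1, interSet_bdd hf t⟩
    exact le_csSup hbdd ⟨y, hIco hy, z, hz, rfl, rfl⟩
  have h2 : inter f g t ≤ fLw (inter f g) x := le_csSup hbddI ⟨t, htI, rfl⟩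
  exact lt_of_lt_of_le (lt_min hc hcz) (le_trans h1 h2)

/-- `(f ⊓ g)^{Lw}(x) = max (f^{Lw}(x)) (g^{Lw}(x))`. -/
theorem stmt_1 (f g : ℝ → ℝ) (hf : MapsI f) (hg : MapsI g)
    (hfn : NormalFn f) (hfc : ConvexFn f) (hgn : NormalFn g) (hgc : ConvexFn g)
    (x : ℝ) (hx : x ∈ Set.Ioc (0:ℝ) 1) :
    fLw (inter f g) x = max (fLw f x) (fLw g x) := by
  obtain ⟨hx0, hx1⟩ := hx
  have hne : (Set.Ico (0:ℝ) x).Nonempty := ⟨0, le_refl 0, hx0⟩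
  have hIco : Set.Ico (0:ℝ) x ⊆ Set.Icc 0 1 :=
    fun t ht => ⟨ht.1, le_trans ht.2.le hx1⟩
  have hbddf : BddAbove (f '' Set.Ico 0 x) := by
    refine ⟨1, ?_⟩; rintro _ ⟨y, hy, rfl⟩; exact (hf y (hIco hy)).2
  have hbddg : BddAbove (g '' Set.Ico 0 x) := by
    refine ⟨1, ?_⟩; rintro _ ⟨y, hy, rfl⟩; exact (hg y (hIco hy)).2
  apply le_antisymm
  · refine csSup_le (hne.image _) ?_
    rintro _ ⟨t, ht, rfl⟩
    refine csSup_le ⟨min (f t) (g t), t, hIco ht, t, hIco ht, min_self t, rfl⟩ ?_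
    rintro v ⟨y, hy, z, hz, hmin, rfl⟩
    rcases le_total y z with h | h
    · have hyt : y = t := by rw [min_eq_left h] at hmin; exact hmin
      have hfy : f y ≤ fLw f x := le_csSup hbddf ⟨y, ⟨hy.1, hyt ▸ ht.2⟩, rfl⟩
      exact le_trans (min_le_left _ _) (le_trans hfy (le_max_left _ _))
    · have hzt : z = t := by rw [min_eq_right h] at hmin; exact hmin
      have hgz : g z ≤ fLw g x := le_csSup hbddg ⟨z, ⟨hz.1, hzt ▸ ht.2⟩, rfl⟩
      exact le_trans (min_le_right _ _) (le_trans hgz (le_max_right _ _))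
  · refine max_le (key_le f g hf hg hgn hx0 hx1) ?_
    have := key_le g f hg hf hfn hx0 hx1
    rwa [inter_comm' g f] at this
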